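/- Let τ_M > 0, τ_T > 0, a_M, a_T ∈ ℝ, t₀ ≤ t_f, and let u_T : ℝ → ℝ be continuous with u_T(s) ≤ a_T for all s ∈ [t₀, t_f]. If Z : ℝ → ℝ satisfies Z′(s) = −τ_M·Ψ((t_f−s)/τ_M)·a_M + τ_T·Ψ((t_f−s)/τ_T)·u_T(s) on [t₀, t_f] (the pursuer applies the constant command u_M = a_M), then the terminal ZEM satisfies Z(t_f) ≤ Z(t₀) − ∂Z*(t_f − t₀). -/

import Mathlib

/-- Ψ(θ) = exp(−θ) + θ − 1 -/
noncomputable def Psi (θ : ℝ) : ℝ := Real.exp (-θ) + θ - 1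

/-- Υ(θ) = θ²/2 − exp(−θ) − θ + 1 -/
noncomputable def Upsilon (θ : ℝ) : ℝ := θ ^ 2 / 2 - Real.exp (-θ) - θ + 1

/-- The singular-region boundary ∂Z*(s) = a_M·τ_M²·Υ(s/τ_M) − a_T·τ_T²·Υ(s/τ_T). -/
noncomputable def singBdry (aM aT τM τT s : ℝ) : ℝ :=
  aM * τM ^ 2 * Upsilon (s / τM) - aT * τT ^ 2 * Upsilon (s / τT)

lemma Psi_nonneg (θ : ℝ) : 0 ≤ Psi θ := by
  have := Real.add_one_le_exp (-θ)
  unfold Psi; linarith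

lemma hasDerivAt_Upsilon (θ : ℝ) : HasDerivAt Upsilon (Psi θ) θ := by
  have h := ((((hasDerivAt_pow 2 θ).div_const 2).sub
    ((hasDerivAt_neg θ).exp)).sub (hasDerivAt_id θ)).add_const 1
  refine h.congr_deriv ?_
  unfold Psi; push_cast; ring

lemma hasDerivAt_sing (aM aT τM τT tf : ℝ) (hτM : τM ≠ 0) (hτT : τT ≠ 0) (s : ℝ) :
    HasDerivAt (fun s => singBdry aM aT τM τT (tf - s))
      (-(aM * τM * Psi ((tf - s) / τM)) + aT * τT * Psi ((tf - s) / τT)) s := by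
  have hin : ∀ τ : ℝ, τ ≠ 0 →
      HasDerivAt (fun s : ℝ => Upsilon ((tf - s) / τ)) (Psi ((tf - s) / τ) * (-1 / τ)) s := by
    intro τ hτ
    have hb : HasDerivAt (fun s : ℝ => (tf - s) / τ) (-1 / τ) s :=
      ((hasDerivAt_id s).const_sub tf).div_const τ
    exact (hasDerivAt_Upsilon ((tf - s) / τ)).comp s hb
  have h := (((hin τM hτM).const_mul (aM * τM ^ 2)).sub
    ((hin τT hτT).const_mul (aT * τT ^ 2)))
  refine h.congr_deriv ?_
  field_simp
  ring

theorem terminal_zem_upper_bound_max_pursuer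
    (τM τT aM aT tf t₀ : ℝ) (hτM : 0 < τM) (hτT : 0 < τT) (ht : t₀ ≤ tf)
    (uT : ℝ → ℝ) (huTc : ContinuousOn uT (Set.Icc t₀ tf))
    (huT : ∀ s ∈ Set.Icc t₀ tf, uT s ≤ aT)
    (Z : ℝ → ℝ)
    (hZ : ∀ s ∈ Set.Icc t₀ tf,
      HasDerivAt Z (-τM * Psi ((tf - s) / τM) * aM + τT * Psi ((tf - s) / τT) * uT s) s) :
    Z tf ≤ Z t₀ - singBdry aM aT τM τT (tf - t₀) := by
  set φ : ℝ → ℝ := fun s => Z s - singBdry aM aT τM τT (tf - s) with hφdef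
  have hφ : ∀ s ∈ Set.Icc t₀ tf, HasDerivAt φ
      ((-τM * Psi ((tf - s) / τM) * aM + τT * Psi ((tf - s) / τT) * uT s) -
        (-(aM * τM * Psi ((tf - s) / τM)) + aT * τT * Psi ((tf - s) / τT))) s := by
    intro s hs
    exact (hZ s hs).sub (hasDerivAt_sing aM aT τM τT tf hτM.ne' hτT.ne' s)
  have hmono : AntitoneOn φ (Set.Icc t₀ tf) := by
    apply antitoneOn_of_deriv_nonpos (convex_Icc t₀ tf)
    · exact fun s hs => ((hφ s hs).continuousAt).continuousWithinAt
    · intro s hs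
      rw [interior_Icc] at hs
      exact ((hφ s (Set.Ioo_subset_Icc_self hs)).differentiableAt).differentiableWithinAt
    · intro s hs
      rw [interior_Icc] at hs
      have hs' := Set.Ioo_subset_Icc_self hs
      rw [(hφ s hs').deriv]
      have h1 := Psi_nonneg ((tf - s) / τT)
      have h2 := huT s hs'
      nlinarith [mul_nonneg (mul_nonneg hτT.le h1) (sub_nonneg.mpr h2)]
  have key := hmono (Set.left_mem_Icc.mpr ht) (Set.right_mem_Icc.mpr ht) ht
  have h0 : singBdry aM aT τM τT (tf - tf) = 0 := by
    simp [singBdry, Upsilon]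
  simp only [hφdef] at key
  rw [h0] at key
  linarith
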